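/- Let τ > 0 and let λ_1, λ_2 be real numbers with λ_1 > −1/τ and λ_2 > −1/τ. Define 𝔣(t) = ( e^t + e^{−tτλ_1} + e^{−tτλ_2} + e^{−t(1+τ(1+λ_1+λ_2))} ) / [ (e^t − 1)(e^{tτ} − 1) ] − e^{−t(1+τ(1+λ_1+λ_2))/2} / [ (e^{t/2} − 1)(e^{tτ/2} − 1) ]. Then 𝔣(t) > 0 for every t > 0. In particular, for a, b ≥ 0 and 0 < c, d < 1 one has a² + b² + c^{−2} + a²b²c²d² − ab(1+c)(1+d) > 0. -/

import Mathlib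

lemma alg16 (a b c d : ℝ) (ha : 0 ≤ a) (hb : 0 ≤ b) (hc0 : 0 < c) (hc1 : c < 1)
    (hd0 : 0 < d) (hd1 : d < 1) :
    0 < a^2 + b^2 + (c^2)⁻¹ + a^2 * b^2 * c^2 * d^2 - a * b * (1 + c) * (1 + d) := by
  have hc2 : (0:ℝ) < c^2 := by positivity
  have key : 0 < a^2*c^2 + b^2*c^2 + 1 + a^2*b^2*c^4*d^2 - a*b*c^2*(1+c)*(1+d) := by
    by_cases hab : a * b = 0
    · have h0 : a*b*c^2*d = 0 := by rw [show a*b*c^2*d = (a*b)*(c^2*d) by ring, hab, zero_mul]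
      have h1 : a^2*b^2*c^4*d^2 = 0 := by
        have : a^2*b^2*c^4*d^2 = (a*b*c^2*d)^2 := by ring
        rw [this, h0]; ring
      have h2 : a*b*c^2*(1+c)*(1+d) = 0 := by
        rw [show a*b*c^2*(1+c)*(1+d) = (a*b)*(c^2*(1+c)*(1+d)) by ring, hab, zero_mul]
      nlinarith [sq_nonneg (a*c), sq_nonneg (b*c)]
    · have hab' : 0 < a * b := lt_of_le_of_ne (mul_nonneg ha hb) (Ne.symm hab)
      have hpos : 0 < a*b*c^2*(1-c)*(1+d) := by
        have := mul_pos (mul_pos (mul_pos hab' hc2) (by linarith : (0:ℝ) < 1 - c))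
          (by linarith : (0:ℝ) < 1 + d)
        linarith [this]
      nlinarith [sq_nonneg (a*c - b*c), sq_nonneg (1 - a*b*c^2*d)]
  have heq : a^2 + b^2 + (c^2)⁻¹ + a^2 * b^2 * c^2 * d^2 - a * b * (1 + c) * (1 + d)
      = (a^2*c^2 + b^2*c^2 + 1 + a^2*b^2*c^4*d^2 - a*b*c^2*(1+c)*(1+d)) * (c^2)⁻¹ := by
    field_simp
  rw [heq]
  exact mul_pos key (inv_pos.2 hc2)

/-- positivity of the spectral density `𝔣` of the Selberg integral
distribution, together with the underlying algebraic inequality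
`a² + b² + c⁻² + a²b²c²d² − ab(1+c)(1+d) > 0` for `a, b ≥ 0` and `0 < c, d < 1`. -/
theorem stmt16 (τ lam1 lam2 : ℝ) (hτ : 0 < τ)
    (h1 : -1/τ < lam1) (h2 : -1/τ < lam2)
    (frak : ℝ → ℝ)
    (hfrak : ∀ t : ℝ, frak t =
      (Real.exp t + Real.exp (-t * τ * lam1) + Real.exp (-t * τ * lam2) +
        Real.exp (-t * (1 + τ * (1 + lam1 + lam2)))) /
        ((Real.exp t - 1) * (Real.exp (t * τ) - 1)) -
      Real.exp (-t * (1 + τ * (1 + lam1 + lam2)) / 2) /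
        ((Real.exp (t / 2) - 1) * (Real.exp (t * τ / 2) - 1))) :
    (∀ t : ℝ, 0 < t → 0 < frak t) ∧
    (∀ a b c d : ℝ, 0 ≤ a → 0 ≤ b → 0 < c → c < 1 → 0 < d → d < 1 →
      0 < a^2 + b^2 + (c^2)⁻¹ + a^2 * b^2 * c^2 * d^2 - a * b * (1 + c) * (1 + d)) := by
  constructor
  · intro t ht
    rw [hfrak t]
    set x := Real.exp (t/2) with hx
    set y := Real.exp (t*τ/2) with hy
    set a := Real.exp (-(t*τ*lam1)/2) with hadef
    set b := Real.exp (-(t*τ*lam2)/2) with hbdef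
    have hx1 : 1 < x := Real.one_lt_exp_iff.mpr (by positivity)
    have hy1 : 1 < y := Real.one_lt_exp_iff.mpr (by positivity)
    have hx0 : 0 < x := by linarith
    have hy0 : 0 < y := by linarith
    have ha0 : 0 < a := Real.exp_pos _
    have hb0 : 0 < b := Real.exp_pos _
    have ex : Real.exp t = x * x := by
      rw [hx, ← Real.exp_add]; congr 1; ring
    have exy : Real.exp (t * τ) = y * y := by
      rw [hy, ← Real.exp_add]; congr 1; ring
    have ea : Real.exp (-t * τ * lam1) = a * a := by
      rw [hadef, ← Real.exp_add]; congr 1; ring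
    have eb : Real.exp (-t * τ * lam2) = b * b := by
      rw [hbdef, ← Real.exp_add]; congr 1; ring
    have em : Real.exp (-t * (1 + τ * (1 + lam1 + lam2)) / 2) = a * b * x⁻¹ * y⁻¹ := by
      rw [hadef, hbdef, hx, hy, ← Real.exp_neg, ← Real.exp_neg, ← Real.exp_add,
        ← Real.exp_add, ← Real.exp_add]
      congr 1; ring
    have em2 : Real.exp (-t * (1 + τ * (1 + lam1 + lam2)))
        = (a * b * x⁻¹ * y⁻¹) * (a * b * x⁻¹ * y⁻¹) := by
      rw [← em, ← Real.exp_add]; congr 1; ring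
    rw [ex, exy, ea, eb, em, em2]
    clear_value x y a b
    clear hfrak h1 h2 ex exy ea eb em em2 hx hy hadef hbdef
    have hP := alg16 a b x⁻¹ y⁻¹ ha0.le hb0.le (inv_pos.2 hx0) (inv_lt_one_of_one_lt₀ hx1)
      (inv_pos.2 hy0) (inv_lt_one_of_one_lt₀ hy1)
    have hxne : x ≠ 0 := hx0.ne'
    have hyne : y ≠ 0 := hy0.ne'
    have hx1ne : x - 1 ≠ 0 := sub_ne_zero.2 hx1.ne'
    have hy1ne : y - 1 ≠ 0 := sub_ne_zero.2 hy1.ne'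
    have hxx : (0:ℝ) < x * x - 1 := by nlinarith [hx1]
    have hyy : (0:ℝ) < y * y - 1 := by nlinarith [hy1]
    have key : (x * x + a * a + b * b + a * b * x⁻¹ * y⁻¹ * (a * b * x⁻¹ * y⁻¹)) /
        ((x * x - 1) * (y * y - 1)) - a * b * x⁻¹ * y⁻¹ / ((x - 1) * (y - 1))
        = (a^2 + b^2 + (x⁻¹^2)⁻¹ + a^2 * b^2 * x⁻¹^2 * y⁻¹^2
            - a * b * (1 + x⁻¹) * (1 + y⁻¹)) / ((x * x - 1) * (y * y - 1)) := by
      rw [div_sub_div _ _ (mul_ne_zero hxx.ne' hyy.ne') (mul_ne_zero hx1ne hy1ne), div_eq_div_iff (mul_ne_zero (mul_ne_zero hxx.ne' hyy.ne') (mul_ne_zero hx1ne hy1ne)) (mul_ne_zero hxx.ne' hyy.ne')]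
      field_simp
      ring
    rw [key]
    exact div_pos hP (mul_pos hxx hyy)
  · intro a b c d ha hb hc0 hc1 hd0 hd1
    exact alg16 a b c d ha hb hc0 hc1 hd0 hd1
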